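/- Let ψ_q be a Dirichlet character modulo q with q | N | c and ν = ψ_q·ν_η. Write 24m − 23 = α²M₁ with M₁ squarefree. Then |S(m,n,c,ν)| ≪ q^{3/2} σ₀(gcd(α,c)) σ₀(c) √c · gcd((24m−23)(24n−23), c)^{1/2}. -/

import Mathlib

open scoped Classical

noncomputable def eR (r : ℝ) : ℂ := Complex.exp (2 * Real.pi * Complex.I * r)

noncomputable def sawtooth (x : ℝ) : ℝ :=
  if ∃ k : ℤ, x = k then 0 else Int.fract x - 1/2

noncomputable def dedekindSum (d : ℤ) (c : ℕ) : ℝ :=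
  ∑ r ∈ Finset.range c, sawtooth ((r : ℝ) / c) * sawtooth ((d : ℝ) * r / c)

noncomputable def etaMult (a d : ℤ) (c : ℕ) : ℂ :=
  eR (-(1/8)) * Complex.exp (-(Real.pi) * Complex.I * dedekindSum d c) *
    eR (((a : ℝ) + d) / (24 * c))

noncomputable def SgenR (ν : ℤ → ℤ → ℕ → ℂ) (α : ℝ) (m n : ℤ) (c : ℕ) : ℂ :=
  ∑ a ∈ Finset.range c, ∑ d ∈ Finset.range c,
    if (c : ℤ) ∣ ((a : ℤ) * d - 1) then
      (starRingEnd ℂ) (ν a d c) * eR ((((m : ℝ) - α) * a + ((n : ℝ) - α) * d) / c)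
    else 0

section AuxLemmas
lemma eR_add (x y : ℝ) : eR (x + y) = eR x * eR y := by
  simp only [eR, ← Complex.exp_add]
  push_cast
  ring_nf

lemma eR_zero : eR 0 = 1 := by simp [eR]

lemma abs_eR (x : ℝ) : ‖eR x‖ = 1 := by
  have : eR x = Complex.exp (((2 * Real.pi * x : ℝ) : ℂ) * Complex.I) := by
    simp only [eR]; push_cast; ring_nf
  rw [this, Complex.norm_exp_ofReal_mul_I]

lemma eR_nat_mul (n : ℕ) (x : ℝ) : eR (n * x) = eR x ^ n := by
  induction n with
  | zero => simp [eR_zero]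
  | succ k ih =>
    have h : ((k : ℝ) + 1) * x = k * x + x := by ring
    rw [pow_succ, ← ih, ← eR_add]
    push_cast
    rw [h]

lemma eR_int (k : ℤ) : eR (k : ℝ) = 1 := by
  rw [eR, Complex.exp_eq_one_iff]
  exact ⟨k, by push_cast; ring⟩

lemma eR_eq_one_iff (x : ℝ) : eR x = 1 ↔ ∃ k : ℤ, x = k := by
  rw [eR, Complex.exp_eq_one_iff]
  constructor
  · rintro ⟨k, hk⟩
    refine ⟨k, ?_⟩
    have h2 : ((2 : ℂ) * Real.pi * Complex.I) ≠ 0 := by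
      simp [Complex.I_ne_zero, Real.pi_ne_zero, Complex.ofReal_ne_zero]
    have hx : ((2 : ℂ) * Real.pi * Complex.I) * x = ((2 : ℂ) * Real.pi * Complex.I) * k := by
      rw [hk]; ring
    have : (x : ℂ) = k := mul_left_cancel₀ h2 hx
    exact_mod_cast this
  · rintro ⟨k, hk⟩
    exact ⟨k, by rw [hk]; push_cast; ring⟩

/-- Geometric-sum orthogonality. -/
lemma sum_eR (q : ℕ) (hq : 0 < q) (k : ℤ) :
    ∑ r ∈ Finset.range q, eR ((k : ℝ) * r / q) = if (q : ℤ) ∣ k then (q : ℂ) else 0 := by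
  have hterm : ∀ r : ℕ, eR ((k : ℝ) * r / q) = eR ((k : ℝ) / q) ^ r := by
    intro r
    rw [← eR_nat_mul]
    congr 1; ring
  simp only [hterm]
  by_cases h : (q : ℤ) ∣ k
  · rw [if_pos h]
    obtain ⟨t, ht⟩ := h
    have : (k : ℝ) / q = (t : ℤ) := by
      rw [ht]; push_cast
      field_simp
    rw [this, eR_int]
    simp
  · rw [if_neg h]
    have hz : eR ((k : ℝ) / q) ≠ 1 := by
      intro hcon
      rw [eR_eq_one_iff] at hcon
      obtain ⟨t, ht⟩ := hcon
      apply h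
      refine ⟨t, ?_⟩
      have hq' : (q : ℝ) ≠ 0 := by positivity
      have : (k : ℝ) = q * t := by
        field_simp at ht; linarith [ht]
      exact_mod_cast this
    rw [geom_sum_eq hz]
    have hpow : eR ((k : ℝ) / q) ^ q = 1 := by
      rw [← eR_nat_mul]
      have hq' : (q : ℝ) ≠ 0 := by positivity
      have h1 : (q : ℝ) * ((k : ℝ) / q) = ((k : ℤ) : ℝ) := by field_simp
      rw [h1, eR_int]
    rw [hpow]
    simp

/-- Discrete Fourier inversion for a function on `ZMod q`. -/
lemma fourier_inv (q : ℕ) (hq : 0 < q) (f : ZMod q → ℂ) (d : ℕ) :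
    f (d : ZMod q) = (1 / q) * ∑ r ∈ Finset.range q,
      (∑ u ∈ Finset.range q, f (u : ZMod q) * eR (-((u : ℝ) * r) / q)) * eR ((d : ℝ) * r / q) := by
  have key : ∑ r ∈ Finset.range q, (∑ u ∈ Finset.range q,
      f (u : ZMod q) * eR (-((u : ℝ) * r) / q)) * eR ((d : ℝ) * r / q)
      = ∑ u ∈ Finset.range q, f (u : ZMod q) *
          (if (q : ℤ) ∣ ((d : ℤ) - u) then (q : ℂ) else 0) := by
    simp only [Finset.sum_mul]
    rw [Finset.sum_comm]
    refine Finset.sum_congr rfl fun u _ => ?_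
    have hcomb : ∀ r : ℕ, f (u : ZMod q) * eR (-((u : ℝ) * r) / q) * eR ((d : ℝ) * r / q)
        = f (u : ZMod q) * eR ((((d : ℤ) - u : ℤ) : ℝ) * r / q) := by
      intro r
      rw [mul_assoc, ← eR_add]
      congr 2
      push_cast
      ring
    simp only [hcomb]
    rw [← Finset.mul_sum, sum_eR q hq]
  rw [key]
  -- now evaluate the single surviving term
  have hmem : d % q ∈ Finset.range q := Finset.mem_range.mpr (Nat.mod_lt d hq)
  have hsingle : ∑ u ∈ Finset.range q, f (u : ZMod q) *
      (if (q : ℤ) ∣ ((d : ℤ) - u) then (q : ℂ) else 0) = q * f (d : ZMod q) := by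
    rw [Finset.sum_eq_single_of_mem (d % q) hmem]
    · have hdvd : (q : ℤ) ∣ ((d : ℤ) - (d % q : ℕ)) := by
        refine ⟨(d / q : ℕ), ?_⟩
        have h0 : d % q + q * (d / q) = d := Nat.mod_add_div d q
        have h1 : ((d % q : ℕ) : ℤ) + (q : ℤ) * ((d / q : ℕ) : ℤ) = (d : ℤ) := by
          exact_mod_cast h0
        push_cast at h1 ⊢
        linarith
      rw [if_pos hdvd, ZMod.natCast_mod]
      ring
    · intro u hu hne
      rw [if_neg, mul_zero]
      intro hdvd
      apply hne
      have hu' : u < q := Finset.mem_range.mp hu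
      have h2 : (u : ℤ) % q = (d : ℤ) % q := Int.modEq_iff_dvd.mpr hdvd
      have h3 : (u : ℤ) % q = u := Int.emod_eq_of_lt (by positivity) (by exact_mod_cast hu')
      have h4 : ((d % q : ℕ) : ℤ) = (d : ℤ) % (q : ℤ) := by push_cast; ring
      have : (u : ℤ) = ((d % q : ℕ) : ℤ) := by omega
      exact_mod_cast this
  rw [hsingle]
  have hq' : (q : ℂ) ≠ 0 := Nat.cast_ne_zero.mpr hq.ne'
  field_simp

lemma gcd_bound_aux (q k : ℕ) (hq : 0 < q) (hk : 0 < k) (m n α M₁ : ℤ) (r : ℕ)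
    (h24 : 24 * m - 23 = α ^ 2 * M₁) :
    Int.gcd (M₁ * (24 * (n + (r : ℤ) * k) - 23)) ((q * k : ℕ) : ℤ) ≤
      q * Int.gcd ((24 * m - 23) * (24 * n - 23)) ((q * k : ℕ) : ℤ) := by
  set c : ℕ := q * k with hc
  set D : ℕ := Int.gcd (M₁ * (24 * (n + (r : ℤ) * k) - 23)) ((c : ℕ) : ℤ) with hD
  have hD1 : (D : ℤ) ∣ M₁ * (24 * (n + (r : ℤ) * k) - 23) := Int.gcd_dvd_left _ _
  have hD2 : (D : ℤ) ∣ (c : ℤ) := Int.gcd_dvd_right _ _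
  have hsplit : (q : ℤ) * (M₁ * (24 * (n + (r : ℤ) * k) - 23))
      = q * (M₁ * (24 * n - 23)) + (24 * M₁ * r) * (c : ℤ) := by
    have : ((c : ℕ) : ℤ) = (q : ℤ) * k := by push_cast [hc]; ring
    rw [this]; ring
  have hstep1 : (D : ℤ) ∣ q * (M₁ * (24 * n - 23)) := by
    have h1 : (D : ℤ) ∣ (q : ℤ) * (M₁ * (24 * (n + (r : ℤ) * k) - 23)) := hD1.mul_left _
    rw [hsplit] at h1
    have h2 : (D : ℤ) ∣ (24 * M₁ * r) * (c : ℤ) := hD2.mul_left _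
    have h3 := dvd_sub h1 h2
    simpa using h3
  have hstep2 : (q : ℤ) * (M₁ * (24 * n - 23)) ∣ (q : ℤ) * ((24 * m - 23) * (24 * n - 23)) :=
    ⟨α ^ 2, by rw [h24]; ring⟩
  have hDX : (D : ℤ) ∣ (q : ℤ) * ((24 * m - 23) * (24 * n - 23)) := hstep1.trans hstep2
  have hDc : (D : ℤ) ∣ (q : ℤ) * (c : ℤ) := hD2.mul_left _
  have hgcd : (D : ℤ) ∣ (Int.gcd ((q : ℤ) * ((24 * m - 23) * (24 * n - 23))) ((q : ℤ) * c) : ℤ) :=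
    Int.dvd_coe_gcd hDX hDc
  rw [Int.gcd_mul_left] at hgcd
  have hnat : D ∣ q * Int.gcd ((24 * m - 23) * (24 * n - 23)) (c : ℤ) := by
    have : (q : ℤ).natAbs = q := Int.natAbs_natCast q
    rw [this] at hgcd
    exact_mod_cast hgcd
  refine Nat.le_of_dvd ?_ hnat
  have hcpos : (0 : ℤ) ≠ (c : ℤ) := by
    have : 0 < c := Nat.mul_pos hq hk
    exact_mod_cast this.ne
  have : 0 < Int.gcd ((24 * m - 23) * (24 * n - 23)) (c : ℤ) := by
    rw [Int.gcd_pos_iff]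
    right
    exact fun h => hcpos (by exact_mod_cast h.symm)
  exact Nat.mul_pos hq this

end AuxLemmas

/-- The key Fourier-expansion identity:  `S(m,n,c,ψ·ν_η)` is a finite linear combination of
shifted eta-multiplier Kloosterman sums. -/
lemma key_identity (q k : ℕ) (hq : 0 < q) (hk : 0 < k) (ψ : DirichletCharacter ℂ q)
    (m n : ℤ) :
    SgenR (fun a d c'' => ψ ((d : ZMod q)) * etaMult a d c'') (23/24) m n (q * k)
      = (1 / (q : ℂ)) * ∑ r ∈ Finset.range q,
          (∑ u ∈ Finset.range q, (starRingEnd ℂ) (ψ (u : ZMod q)) * eR (-((u : ℝ) * r) / q)) *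
            SgenR (fun a d c'' => etaMult a d c'') (23/24) m (n + (r : ℤ) * k) (q * k) := by
  have hcpos : 0 < q * k := Nat.mul_pos hq hk
  have hcR : ((q * k : ℕ) : ℝ) = (q : ℝ) * k := by push_cast; ring
  have hqR : (q : ℝ) ≠ 0 := by positivity
  have hkR : (k : ℝ) ≠ 0 := by positivity
  have per : ∀ a d : ℕ,
      (if ((q * k : ℕ) : ℤ) ∣ ((a : ℤ) * d - 1) then
        (starRingEnd ℂ) (ψ ((((d : ℕ) : ℤ) : ZMod q)) * etaMult a d (q * k)) *
          eR ((((m : ℝ) - 23/24) * a + ((n : ℝ) - 23/24) * d) / (q * k : ℕ))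
      else 0)
      = ∑ r ∈ Finset.range q, (1 / (q : ℂ)) *
          ((∑ u ∈ Finset.range q, (starRingEnd ℂ) (ψ (u : ZMod q)) * eR (-((u : ℝ) * r) / q)) *
            (if ((q * k : ℕ) : ℤ) ∣ ((a : ℤ) * d - 1) then
              (starRingEnd ℂ) (etaMult a d (q * k)) *
                eR ((((m : ℝ) - 23/24) * a + (((n + (r : ℤ) * k : ℤ) : ℝ) - 23/24) * d) / (q * k : ℕ))
            else 0)) := by
    intro a d
    by_cases hcond : ((q * k : ℕ) : ℤ) ∣ ((a : ℤ) * d - 1)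
    · simp only [if_pos hcond]
      have hfr : ∀ r : ℕ,
          (((m : ℝ) - 23/24) * a + (((n + (r : ℤ) * k : ℤ) : ℝ) - 23/24) * d) / ((q * k : ℕ) : ℝ)
            = ((((m : ℝ) - 23/24) * a + ((n : ℝ) - 23/24) * d) / ((q * k : ℕ) : ℝ))
              + (d : ℝ) * r / q := by
        intro r
        rw [hcR]
        push_cast
        field_simp
        ring
      have hF := fourier_inv q hq (fun z => (starRingEnd ℂ) (ψ z)) d
      have hcast : ((((d : ℕ) : ℤ)) : ZMod q) = (((d : ℕ)) : ZMod q) := by push_cast; rfl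
      rw [map_mul, hcast, hF]
      simp only [hfr, eR_add]
      simp only [mul_assoc, Finset.sum_mul, Finset.mul_sum]
      refine Finset.sum_congr rfl fun r _ => ?_
      refine Finset.sum_congr rfl fun u _ => ?_
      ring
    · simp only [if_neg hcond, mul_zero, Finset.sum_const_zero]
  have swap : ∀ (f : ℕ → ℕ → ℕ → ℂ),
      ∑ a ∈ Finset.range (q * k), ∑ d ∈ Finset.range (q * k), ∑ r ∈ Finset.range q, f r a d
        = ∑ r ∈ Finset.range q, ∑ a ∈ Finset.range (q * k), ∑ d ∈ Finset.range (q * k),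
            f r a d := by
    intro f
    calc ∑ a ∈ Finset.range (q * k), ∑ d ∈ Finset.range (q * k), ∑ r ∈ Finset.range q, f r a d
        = ∑ a ∈ Finset.range (q * k), ∑ r ∈ Finset.range q, ∑ d ∈ Finset.range (q * k),
            f r a d := Finset.sum_congr rfl fun a _ => Finset.sum_comm
      _ = ∑ r ∈ Finset.range q, ∑ a ∈ Finset.range (q * k), ∑ d ∈ Finset.range (q * k),
            f r a d := Finset.sum_comm
  simp only [SgenR]
  calc ∑ a ∈ Finset.range (q * k), ∑ d ∈ Finset.range (q * k),
        (if ((q * k : ℕ) : ℤ) ∣ ((a : ℤ) * d - 1) then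
          (starRingEnd ℂ) (ψ ((((d : ℕ) : ℤ) : ZMod q)) * etaMult a d (q * k)) *
            eR ((((m : ℝ) - 23/24) * a + ((n : ℝ) - 23/24) * d) / (q * k : ℕ))
        else 0)
      = ∑ a ∈ Finset.range (q * k), ∑ d ∈ Finset.range (q * k), ∑ r ∈ Finset.range q,
          (1 / (q : ℂ)) *
          ((∑ u ∈ Finset.range q, (starRingEnd ℂ) (ψ (u : ZMod q)) * eR (-((u : ℝ) * r) / q)) *
            (if ((q * k : ℕ) : ℤ) ∣ ((a : ℤ) * d - 1) then
              (starRingEnd ℂ) (etaMult a d (q * k)) *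
                eR ((((m : ℝ) - 23/24) * a + (((n + (r : ℤ) * k : ℤ) : ℝ) - 23/24) * d) / (q * k : ℕ))
            else 0)) :=
        Finset.sum_congr rfl fun a _ => Finset.sum_congr rfl fun d _ => per a d
    _ = ∑ r ∈ Finset.range q, ∑ a ∈ Finset.range (q * k), ∑ d ∈ Finset.range (q * k),
          (1 / (q : ℂ)) *
          ((∑ u ∈ Finset.range q, (starRingEnd ℂ) (ψ (u : ZMod q)) * eR (-((u : ℝ) * r) / q)) *
            (if ((q * k : ℕ) : ℤ) ∣ ((a : ℤ) * d - 1) then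
              (starRingEnd ℂ) (etaMult a d (q * k)) *
                eR ((((m : ℝ) - 23/24) * a + (((n + (r : ℤ) * k : ℤ) : ℝ) - 23/24) * d) / (q * k : ℕ))
            else 0)) := swap _
    _ = (1 / (q : ℂ)) * ∑ r ∈ Finset.range q,
          (∑ u ∈ Finset.range q, (starRingEnd ℂ) (ψ (u : ZMod q)) * eR (-((u : ℝ) * r) / q)) *
            ∑ a ∈ Finset.range (q * k), ∑ d ∈ Finset.range (q * k),
            (if ((q * k : ℕ) : ℤ) ∣ ((a : ℤ) * d - 1) then
              (starRingEnd ℂ) (etaMult a d (q * k)) *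
                eR ((((m : ℝ) - 23/24) * a + (((n + (r : ℤ) * k : ℤ) : ℝ) - 23/24) * d) / (q * k : ℕ))
            else 0) := by
        simp only [Finset.mul_sum]

theorem stmt_7 (C₀ : ℝ) (hC₀ : 0 < C₀)
    (hEta : ∀ (m' n' : ℤ) (c' : ℕ) (α' M₁' : ℤ), 0 < c' →
      24 * m' - 23 = α' ^ 2 * M₁' → Squarefree M₁' →
      ‖SgenR (fun a d c'' => etaMult a d c'') (23/24) m' n' c'‖ ≤
        C₀ * ((Int.gcd α' c').divisors.card : ℝ) * (c'.divisors.card : ℝ) *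
          Real.sqrt c' * Real.sqrt (Int.gcd (M₁' * (24 * n' - 23)) c')) :
    ∃ C : ℝ, 0 < C ∧ ∀ (N q : ℕ) (ψ : DirichletCharacter ℂ q) (m n α M₁ : ℤ) (c : ℕ),
      0 < q → q ∣ N → 0 < N → N ∣ c → 0 < c →
      24 * m - 23 = α ^ 2 * M₁ → Squarefree M₁ →
      ‖SgenR (fun a d c'' => ψ ((d : ZMod q)) * etaMult a d c'') (23/24) m n c‖ ≤
        C * (q : ℝ) ^ ((3:ℝ)/2) * ((Int.gcd α c).divisors.card : ℝ) *
          (c.divisors.card : ℝ) * Real.sqrt c *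
          Real.sqrt (Int.gcd ((24 * m - 23) * (24 * n - 23)) c) := by
  refine ⟨C₀, hC₀, ?_⟩
  intro N q ψ m n α M₁ c hq hqN hN hNc hcpos h24 hsf
  obtain ⟨k, hck⟩ : q ∣ c := hqN.trans hNc
  have hk : 0 < k := by
    rcases Nat.eq_zero_or_pos k with h | h
    · subst h; simp at hck; omega
    · exact h
  subst hck
  have hqR : (0:ℝ) < q := by exact_mod_cast hq
  -- shorthand (no `set`, to keep definitional transparency simple)
  have hT : ∀ r : ℕ,
      ‖SgenR (fun a d c'' => etaMult a d c'') (23/24) m (n + (r : ℤ) * k) (q * k)‖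
        ≤ C₀ * ((Int.gcd α (q * k)).divisors.card : ℝ) * ((q * k : ℕ).divisors.card : ℝ) *
            Real.sqrt (q * k : ℕ) *
            (Real.sqrt q *
              Real.sqrt (Int.gcd ((24 * m - 23) * (24 * n - 23)) ((q * k : ℕ) : ℤ))) := by
    intro r
    have h1 := hEta m (n + (r : ℤ) * k) (q * k) α M₁ (Nat.mul_pos hq hk) h24 hsf
    refine h1.trans ?_
    have h2 : Int.gcd (M₁ * (24 * (n + (r : ℤ) * k) - 23)) ((q * k : ℕ) : ℤ) ≤
        q * Int.gcd ((24 * m - 23) * (24 * n - 23)) ((q * k : ℕ) : ℤ) :=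
      gcd_bound_aux q k hq hk m n α M₁ r h24
    have h3 : Real.sqrt (Int.gcd (M₁ * (24 * (n + (r : ℤ) * k) - 23)) ((q * k : ℕ) : ℤ))
        ≤ Real.sqrt q * Real.sqrt (Int.gcd ((24 * m - 23) * (24 * n - 23)) ((q * k : ℕ) : ℤ)) := by
      rw [← Real.sqrt_mul (by positivity)]
      apply Real.sqrt_le_sqrt
      exact_mod_cast h2
    apply mul_le_mul_of_nonneg_left h3
    positivity
  have hg : ∀ r : ℕ,
      ‖∑ u ∈ Finset.range q,
        (starRingEnd ℂ) (ψ (u : ZMod q)) * eR (-((u : ℝ) * r) / q)‖ ≤ q := by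
    intro r
    refine le_trans (norm_sum_le _ _) ?_
    have hterm : ∀ u ∈ Finset.range q,
        ‖(starRingEnd ℂ) (ψ (u : ZMod q)) * eR (-((u : ℝ) * r) / q)‖ ≤ 1 := by
      intro u _
      rw [norm_mul]
      have h1 : ‖eR (-((u : ℝ) * r) / q)‖ = 1 := by
        rw [abs_eR]
      rw [h1, mul_one, Complex.norm_conj]
      exact ψ.norm_le_one _
    refine le_trans (Finset.sum_le_sum hterm) ?_
    simp
  -- assemble
  rw [key_identity q k hq hk ψ m n, norm_mul]
  have habs1 : ‖(1 / (q : ℂ))‖ = 1 / (q : ℝ) := by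
    rw [norm_div]
    simp
  rw [habs1]
  have hX0 : (0:ℝ) ≤ C₀ * ((Int.gcd α (q * k)).divisors.card : ℝ) *
      ((q * k : ℕ).divisors.card : ℝ) * Real.sqrt (q * k : ℕ) *
      (Real.sqrt q * Real.sqrt (Int.gcd ((24 * m - 23) * (24 * n - 23)) ((q * k : ℕ) : ℤ))) := by
    positivity
  have hsum : ‖∑ r ∈ Finset.range q,
      (∑ u ∈ Finset.range q, (starRingEnd ℂ) (ψ (u : ZMod q)) * eR (-((u : ℝ) * r) / q)) *
        SgenR (fun a d c'' => etaMult a d c'') (23/24) m (n + (r : ℤ) * k) (q * k)‖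
      ≤ (q : ℝ) * ((q : ℝ) * (C₀ * ((Int.gcd α (q * k)).divisors.card : ℝ) *
          ((q * k : ℕ).divisors.card : ℝ) * Real.sqrt (q * k : ℕ) *
          (Real.sqrt q *
            Real.sqrt (Int.gcd ((24 * m - 23) * (24 * n - 23)) ((q * k : ℕ) : ℤ))))) := by
    refine le_trans (norm_sum_le _ _) ?_
    have hterm : ∀ r ∈ Finset.range q,
        ‖(∑ u ∈ Finset.range q, (starRingEnd ℂ) (ψ (u : ZMod q)) * eR (-((u : ℝ) * r) / q)) *
          SgenR (fun a d c'' => etaMult a d c'') (23/24) m (n + (r : ℤ) * k) (q * k)‖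
        ≤ (q : ℝ) * (C₀ * ((Int.gcd α (q * k)).divisors.card : ℝ) *
            ((q * k : ℕ).divisors.card : ℝ) * Real.sqrt (q * k : ℕ) *
            (Real.sqrt q *
              Real.sqrt (Int.gcd ((24 * m - 23) * (24 * n - 23)) ((q * k : ℕ) : ℤ)))) := by
      intro r _
      rw [norm_mul]
      apply mul_le_mul
      · exact hg r
      · exact hT r
      · positivity
      · positivity
    refine le_trans (Finset.sum_le_sum hterm) ?_
    rw [Finset.sum_const, Finset.card_range, nsmul_eq_mul]
  have h32 : (q : ℝ) ^ ((3:ℝ)/2) = (q : ℝ) * Real.sqrt q := by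
    have h1 : ((3:ℝ)/2) = 1 + 1/2 := by norm_num
    rw [h1, Real.rpow_add hqR, Real.rpow_one, Real.sqrt_eq_rpow]
  refine le_trans (mul_le_mul_of_nonneg_left hsum (by positivity)) ?_
  rw [h32]
  have hq0 : (q : ℝ) ≠ 0 := ne_of_gt hqR
  field_simp
  ring_nf
  apply le_of_eq
  push_cast
  ring
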